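/- Let Λ be a 2-graph with a single vertex that is finite with at least two edges of each colour. Then Λ is periodic if and only if there exist positive integers a and b and a bijection γ : Λ^{(a,0)} → Λ^{(0,b)} such that for every μ ∈ Λ^{(a,0)} and every ν ∈ Λ^{(0,b)} one has μν = γ(μ)γ^{-1}(ν) in Λ. -/

import Mathlib

/-- Davidson–Yang. A 2-graph with a single vertex is encoded as a monoid `Λ`
with a degree map `d : Λ → ℕ²` that is additive and has the unique factorisation property
(`hfac`).  For `p ≤ q ≤ d lam`, `seg lam p q` is the segment `lam(p,q)`: the unique `β` of
degree `q - p` such that `lam = α * β * γ` with `d α = p` (`hseg`).  Assume `Λ` is finite with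
at least two edges of each colour.  Then `Λ` is periodic (there are `m ≠ n` in `ℕ²` with
`lam(m, m + d lam - (m ⊔ n)) = lam(n, n + d lam - (m ⊔ n))` for all `lam` of degree `≥ m ⊔ n`)
if and only if there are positive integers `a`, `b` and a bijection
`γ : Λ^{(a,0)} → Λ^{(0,b)}` such that `μ * ν = γ μ * γ⁻¹ ν` for all `μ ∈ Λ^{(a,0)}`,
`ν ∈ Λ^{(0,b)}`. -/
theorem stmt1 {Λ : Type*} [Monoid Λ] (d : Λ → ℕ × ℕ)
    (hd : ∀ x y : Λ, d (x * y) = d x + d y)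
    (hfac : ∀ (lam : Λ) (p q : ℕ × ℕ), d lam = p + q →
      ∃! mn : Λ × Λ, d mn.1 = p ∧ d mn.2 = q ∧ lam = mn.1 * mn.2)
    (seg : Λ → ℕ × ℕ → ℕ × ℕ → Λ)
    (hseg : ∀ (lam : Λ) (p q : ℕ × ℕ), p ≤ q → q ≤ d lam →
      d (seg lam p q) = q - p ∧ ∃ α γ : Λ, d α = p ∧ lam = α * seg lam p q * γ)
    (hfinB : {e : Λ | d e = (1, 0)}.Finite) (hfinR : {e : Λ | d e = (0, 1)}.Finite)
    (h2B : 2 ≤ Nat.card {e : Λ | d e = (1, 0)}) (h2R : 2 ≤ Nat.card {e : Λ | d e = (0, 1)}) :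
    (∃ m n : ℕ × ℕ, m ≠ n ∧ ∀ lam : Λ, m ⊔ n ≤ d lam →
        seg lam m (m + d lam - (m ⊔ n)) = seg lam n (n + d lam - (m ⊔ n))) ↔
    (∃ (a b : ℕ) (γ : {μ : Λ // d μ = (a, 0)} ≃ {ν : Λ // d ν = (0, b)}),
      0 < a ∧ 0 < b ∧
        ∀ (μ : {μ : Λ // d μ = (a, 0)}) (ν : {ν : Λ // d ν = (0, b)}),
          (μ : Λ) * (ν : Λ) = (γ μ : Λ) * (γ.symm ν : Λ)) := by
  -- basic consequences of the axioms
  have hd1 : d (1 : Λ) = 0 := by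
    have h := hd (1 : Λ) 1
    rw [one_mul] at h
    have h2 : d (1 : Λ) + 0 = d (1 : Λ) + d (1 : Λ) := by rw [add_zero]; exact h
    exact (add_left_cancel h2).symm
  have hdeg0 : ∀ x : Λ, d x = 0 → x = 1 := by
    intro x hx
    obtain ⟨mn, _, hu⟩ := hfac x 0 0 (by rw [hx, add_zero])
    have e1 := hu (1, x) ⟨hd1, hx, (one_mul x).symm⟩
    have e2 := hu (x, 1) ⟨hx, hd1, (mul_one x).symm⟩
    have e3 := e1.trans e2.symm
    exact (congrArg Prod.fst e3).symm
  have hcan : ∀ α β α' β' : Λ, d α = d α' → α * β = α' * β' → α = α' ∧ β = β' := by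
    intro α β α' β' h1 h2
    have hdb : d β = d β' := by
      have h3 : d α + d β = d α' + d β' := by rw [← hd, ← hd, h2]
      rw [h1] at h3
      exact add_left_cancel h3
    obtain ⟨mn, _, hu⟩ := hfac (α * β) (d α) (d β) (hd α β)
    have e1 := hu (α, β) ⟨rfl, rfl, rfl⟩
    have e2 := hu (α', β') ⟨h1.symm, hdb.symm, h2⟩
    have e3 := e1.trans e2.symm
    exact ⟨congrArg Prod.fst e3, congrArg Prod.snd e3⟩
  have hsplit : ∀ (x : Λ) (p q : ℕ × ℕ), d x = p + q →
      ∃ y z : Λ, d y = p ∧ d z = q ∧ x = y * z := by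
    intro x p q h
    obtain ⟨mn, ⟨h1, h2, h3⟩, -⟩ := hfac x p q h
    exact ⟨mn.1, mn.2, h1, h2, h3⟩
  have hsegU : ∀ (lam : Λ) (p q : ℕ × ℕ) (α β g : Λ), p ≤ q → q ≤ d lam →
      d α = p → d β = q - p → lam = α * β * g → seg lam p q = β := by
    intro lam p q α β g h1 h2 h3 h4 h5
    obtain ⟨hds, α', g', hα', hf⟩ := hseg lam p q h1 h2
    have c1 : α * (β * g) = α' * (seg lam p q * g') := by
      rw [← mul_assoc, ← mul_assoc]
      exact h5.symm.trans hf
    have c2 := hcan α (β * g) α' (seg lam p q * g') (h3.trans hα'.symm) c1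
    have c3 := hcan β g (seg lam p q) g' (h4.trans hds.symm) c2.2
    exact c3.1.symm
  -- two distinct edges of each colour
  have hBsub := hfinB.to_subtype
  have hRsub := hfinR.to_subtype
  have hBnt : Nontrivial {e : Λ | d e = (1, 0)} :=
    Finite.one_lt_card_iff_nontrivial.mp (by omega)
  have hRnt : Nontrivial {e : Λ | d e = (0, 1)} :=
    Finite.one_lt_card_iff_nontrivial.mp (by omega)
  obtain ⟨⟨eB, heB⟩, ⟨eB', heB'⟩, hBne⟩ := exists_pair_ne {e : Λ | d e = (1, 0)}
  obtain ⟨⟨eR, heR⟩, ⟨eR', heR'⟩, hRne⟩ := exists_pair_ne {e : Λ | d e = (0, 1)}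
  simp only [Set.mem_setOf_eq] at heB heB' heR heR'
  have hBne' : eB ≠ eB' := fun h => hBne (Subtype.ext h)
  have hRne' : eR ≠ eR' := fun h => hRne (Subtype.ext h)
  -- existence of elements of every degree
  have hex : ∀ p : ℕ × ℕ, ∃ x : Λ, d x = p := by
    have hpB : ∀ k : ℕ, d (eB ^ k) = (k, 0) := by
      intro k
      induction k with
      | zero => rw [pow_zero, hd1]; rfl
      | succ n ih => rw [pow_succ, hd, ih, heB, Prod.mk_add_mk]
    have hpR : ∀ k : ℕ, d (eR ^ k) = (0, k) := by
      intro k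
      induction k with
      | zero => rw [pow_zero, hd1]; rfl
      | succ n ih => rw [pow_succ, hd, ih, heR, Prod.mk_add_mk]
    intro p
    refine ⟨eB ^ p.1 * eR ^ p.2, ?_⟩
    rw [hd, hpB, hpR, Prod.mk_add_mk]
    simp
  -- the common construction of the bijection from a "pure" periodicity
  have build : ∀ a b : ℕ, 0 < a → 0 < b →
      (∀ lam : Λ, ((a, 0) : ℕ × ℕ) ⊔ (0, b) ≤ d lam →
        seg lam (a, 0) ((a, 0) + d lam - (((a, 0) : ℕ × ℕ) ⊔ (0, b))) =
        seg lam (0, b) ((0, b) + d lam - (((a, 0) : ℕ × ℕ) ⊔ (0, b)))) →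
      (∃ (a b : ℕ) (γ : {μ : Λ // d μ = (a, 0)} ≃ {ν : Λ // d ν = (0, b)}),
        0 < a ∧ 0 < b ∧
          ∀ (μ : {μ : Λ // d μ = (a, 0)}) (ν : {ν : Λ // d ν = (0, b)}),
            (μ : Λ) * (ν : Λ) = (γ μ : Λ) * (γ.symm ν : Λ)) := by
    intro a b ha hb hper2
    have hsup : ((a, 0) : ℕ × ℕ) ⊔ (0, b) = (a, b) := by
      simp [Prod.sup_def]
    rw [hsup] at hper2
    -- the switch map
    have hSwE : ∀ z : {μ : Λ // d μ = ((a : ℕ), (0 : ℕ))} × {ν : Λ // d ν = ((0 : ℕ), (b : ℕ))},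
        ∃ w : {ν : Λ // d ν = ((0 : ℕ), (b : ℕ))} × {μ : Λ // d μ = ((a : ℕ), (0 : ℕ))},
          (z.1 : Λ) * (z.2 : Λ) = (w.1 : Λ) * (w.2 : Λ) := by
      rintro ⟨⟨μ, hμ⟩, ⟨ν, hν⟩⟩
      obtain ⟨y, z, h1, h2, h3⟩ := hsplit (μ * ν) (0, b) (a, 0)
        (by simp only [hd, hμ, hν, Prod.mk_add_mk, Prod.mk.injEq, true_and, and_true]; omega)
      exact ⟨⟨⟨y, h1⟩, ⟨z, h2⟩⟩, h3⟩
    choose Sw hSw using hSwE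
    have hSw' : ∀ (μ : {μ : Λ // d μ = ((a : ℕ), (0 : ℕ))}) (ν : {ν : Λ // d ν = ((0 : ℕ), (b : ℕ))}),
        (μ : Λ) * (ν : Λ) = ((Sw (μ, ν)).1 : Λ) * ((Sw (μ, ν)).2 : Λ) := fun μ ν => hSw (μ, ν)
    -- identity (P)
    have hP : ∀ (μ : {μ : Λ // d μ = ((a : ℕ), (0 : ℕ))}) (ν ρ : {ν : Λ // d ν = ((0 : ℕ), (b : ℕ))}),
        (Sw ((Sw (μ, ν)).2, ρ)).1 = ν := by
      intro μ ν ρ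
      have hdl : d ((μ : Λ) * (ν : Λ) * (ρ : Λ)) = (a, b + b) := by
        simp only [hd, μ.2, ν.2, ρ.2, Prod.mk_add_mk, Prod.mk.injEq, true_and, and_true]
        omega
      have h := hper2 ((μ : Λ) * (ν : Λ) * (ρ : Λ)) (by rw [hdl, Prod.mk_le_mk]; omega)
      rw [hdl] at h
      rw [show ((a, 0) : ℕ × ℕ) + (a, b + b) - (a, b) = ((a : ℕ), (b : ℕ)) by
        rw [Prod.mk_add_mk, Prod.mk_sub_mk, Prod.mk.injEq]; omega] at h
      rw [show ((0, b) : ℕ × ℕ) + (a, b + b) - (a, b) = ((0 : ℕ), b + b) by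
        rw [Prod.mk_add_mk, Prod.mk_sub_mk, Prod.mk.injEq]; omega] at h
      have e1 : seg ((μ : Λ) * (ν : Λ) * (ρ : Λ)) (a, 0) (a, b) = (ν : Λ) := by
        refine hsegU _ _ _ (μ : Λ) (ν : Λ) (ρ : Λ) (by rw [Prod.mk_le_mk]; omega)
          (by rw [hdl, Prod.mk_le_mk]; omega) μ.2 ?_ rfl
        rw [ν.2, Prod.mk_sub_mk]
        simp
      have h1 : (μ : Λ) * (ν : Λ) = ((Sw (μ, ν)).1 : Λ) * ((Sw (μ, ν)).2 : Λ) := hSw' μ ν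
      have h2 : ((Sw (μ, ν)).2 : Λ) * (ρ : Λ) =
          ((Sw ((Sw (μ, ν)).2, ρ)).1 : Λ) * ((Sw ((Sw (μ, ν)).2, ρ)).2 : Λ) := hSw' _ ρ
      have e2 : seg ((μ : Λ) * (ν : Λ) * (ρ : Λ)) (0, b) (0, b + b) =
          ((Sw ((Sw (μ, ν)).2, ρ)).1 : Λ) := by
        refine hsegU _ _ _ ((Sw (μ, ν)).1 : Λ) _ ((Sw ((Sw (μ, ν)).2, ρ)).2 : Λ)
          (by rw [Prod.mk_le_mk]; omega) (by rw [hdl, Prod.mk_le_mk]; omega)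
          (Sw (μ, ν)).1.2 ?_ ?_
        · rw [(Sw ((Sw (μ, ν)).2, ρ)).1.2, Prod.mk_sub_mk]
          simp
        · calc (μ : Λ) * (ν : Λ) * (ρ : Λ)
              = ((Sw (μ, ν)).1 : Λ) * ((Sw (μ, ν)).2 : Λ) * (ρ : Λ) := by rw [h1]
            _ = ((Sw (μ, ν)).1 : Λ) * (((Sw (μ, ν)).2 : Λ) * (ρ : Λ)) := mul_assoc _ _ _
            _ = ((Sw (μ, ν)).1 : Λ) * (((Sw ((Sw (μ, ν)).2, ρ)).1 : Λ) *
                ((Sw ((Sw (μ, ν)).2, ρ)).2 : Λ)) := by rw [h2]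
            _ = ((Sw (μ, ν)).1 : Λ) * ((Sw ((Sw (μ, ν)).2, ρ)).1 : Λ) *
                ((Sw ((Sw (μ, ν)).2, ρ)).2 : Λ) := (mul_assoc _ _ _).symm
      rw [e1, e2] at h
      exact Subtype.ext h.symm
    -- identity (Q)
    have hQ : ∀ (σ μ : {μ : Λ // d μ = ((a : ℕ), (0 : ℕ))}) (ν : {ν : Λ // d ν = ((0 : ℕ), (b : ℕ))}),
        (Sw (σ, (Sw (μ, ν)).1)).2 = μ := by
      intro σ μ ν
      have hdl : d ((σ : Λ) * (μ : Λ) * (ν : Λ)) = (a + a, b) := by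
        simp only [hd, σ.2, μ.2, ν.2, Prod.mk_add_mk, Prod.mk.injEq, true_and, and_true]
        omega
      have h := hper2 ((σ : Λ) * (μ : Λ) * (ν : Λ)) (by rw [hdl, Prod.mk_le_mk]; omega)
      rw [hdl] at h
      rw [show ((a, 0) : ℕ × ℕ) + (a + a, b) - (a, b) = ((a + a : ℕ), (0 : ℕ)) by
        rw [Prod.mk_add_mk, Prod.mk_sub_mk, Prod.mk.injEq]; omega] at h
      rw [show ((0, b) : ℕ × ℕ) + (a + a, b) - (a, b) = ((a : ℕ), (b : ℕ)) by
        rw [Prod.mk_add_mk, Prod.mk_sub_mk, Prod.mk.injEq]; omega] at h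
      have e1 : seg ((σ : Λ) * (μ : Λ) * (ν : Λ)) (a, 0) (a + a, 0) = (μ : Λ) := by
        refine hsegU _ _ _ (σ : Λ) (μ : Λ) (ν : Λ) (by rw [Prod.mk_le_mk]; omega)
          (by rw [hdl, Prod.mk_le_mk]; omega) σ.2 ?_ rfl
        rw [μ.2, Prod.mk_sub_mk]
        simp
      have h1 : (μ : Λ) * (ν : Λ) = ((Sw (μ, ν)).1 : Λ) * ((Sw (μ, ν)).2 : Λ) := hSw' μ ν
      have h2 : (σ : Λ) * ((Sw (μ, ν)).1 : Λ) =
          ((Sw (σ, (Sw (μ, ν)).1)).1 : Λ) * ((Sw (σ, (Sw (μ, ν)).1)).2 : Λ) := hSw' σ _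
      have e2 : seg ((σ : Λ) * (μ : Λ) * (ν : Λ)) (0, b) (a, b) =
          ((Sw (σ, (Sw (μ, ν)).1)).2 : Λ) := by
        refine hsegU _ _ _ ((Sw (σ, (Sw (μ, ν)).1)).1 : Λ) _ ((Sw (μ, ν)).2 : Λ)
          (by rw [Prod.mk_le_mk]; omega) (by rw [hdl, Prod.mk_le_mk]; omega)
          (Sw (σ, (Sw (μ, ν)).1)).1.2 ?_ ?_
        · rw [(Sw (σ, (Sw (μ, ν)).1)).2.2, Prod.mk_sub_mk]
          simp
        · calc (σ : Λ) * (μ : Λ) * (ν : Λ)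
              = (σ : Λ) * ((μ : Λ) * (ν : Λ)) := mul_assoc _ _ _
            _ = (σ : Λ) * (((Sw (μ, ν)).1 : Λ) * ((Sw (μ, ν)).2 : Λ)) := by rw [h1]
            _ = ((σ : Λ) * ((Sw (μ, ν)).1 : Λ)) * ((Sw (μ, ν)).2 : Λ) := (mul_assoc _ _ _).symm
            _ = ((Sw (σ, (Sw (μ, ν)).1)).1 : Λ) * ((Sw (σ, (Sw (μ, ν)).1)).2 : Λ) *
                ((Sw (μ, ν)).2 : Λ) := by rw [h2]
      rw [e1, e2] at h
      exact Subtype.ext h.symm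
    -- independence
    obtain ⟨μ₀v, hμ₀⟩ := hex (a, 0)
    obtain ⟨ν₀v, hν₀⟩ := hex (0, b)
    set μ₀ : {μ : Λ // d μ = ((a : ℕ), (0 : ℕ))} := ⟨μ₀v, hμ₀⟩
    set ν₀ : {ν : Λ // d ν = ((0 : ℕ), (b : ℕ))} := ⟨ν₀v, hν₀⟩
    have hs1i : ∀ (μ : {μ : Λ // d μ = ((a : ℕ), (0 : ℕ))})
        (ν ρ : {ν : Λ // d ν = ((0 : ℕ), (b : ℕ))}), (Sw (μ, ρ)).1 = (Sw (μ, ν)).1 := by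
      intro μ ν ρ
      have h1 := hQ μ₀ μ ν
      have h2 := hP μ₀ (Sw (μ, ν)).1 ρ
      rw [h1] at h2
      exact h2
    have hs2i : ∀ (σ μ : {μ : Λ // d μ = ((a : ℕ), (0 : ℕ))})
        (ν : {ν : Λ // d ν = ((0 : ℕ), (b : ℕ))}), (Sw (σ, ν)).2 = (Sw (μ, ν)).2 := by
      intro σ μ ν
      have h1 := hP μ ν ν₀
      have h2 := hQ σ (Sw (μ, ν)).2 ν₀
      rw [h1] at h2
      exact h2
    refine ⟨a, b, ⟨fun μ => (Sw (μ, ν₀)).1, fun ν => (Sw (μ₀, ν)).2, ?_, ?_⟩, ha, hb, ?_⟩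
    · intro μ
      exact hQ μ₀ μ ν₀
    · intro ν
      exact hP μ₀ ν ν₀
    · intro μ ν
      have h1 := hSw' μ ν
      rw [hs1i μ ν₀ ν, hs2i μ μ₀ ν] at h1
      exact h1
  constructor
  · -- forward direction
    rintro ⟨⟨m1, m2⟩, ⟨n1, n2⟩, hmn, hper⟩
    -- shift lemma
    have hshift : ∀ (x lam : Λ) (p q : ℕ × ℕ), p ≤ q → q ≤ d lam →
        seg (x * lam) (d x + p) (d x + q) = seg lam p q := by
      intro x lam p q h1 h2
      obtain ⟨hds, α, g, hα, hf⟩ := hseg lam p q h1 h2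
      refine hsegU (x * lam) (d x + p) (d x + q) (x * α) (seg lam p q) g
        (add_le_add le_rfl h1) (by rw [hd]; exact add_le_add le_rfl h2)
        (by rw [hd, hα]) ?_ (by
          conv_lhs => rw [hf]
          rw [← mul_assoc, ← mul_assoc])
      rw [hds]
      rcases d x with ⟨u1, u2⟩
      rcases p with ⟨p1, p2⟩
      rcases q with ⟨q1, q2⟩
      rw [Prod.mk_add_mk, Prod.mk_add_mk, Prod.mk_sub_mk, Prod.mk_sub_mk, Prod.mk.injEq]
      omega
    -- transfer of periodicity along subtraction of the common part
    have transfer : ∀ m1' m2' n1' n2' c1 c2 u1 u2 v1 v2 w1 w2 : ℕ,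
        m1' = c1 + u1 → m2' = c2 + u2 → n1' = c1 + v1 → n2' = c2 + v2 →
        (c1 + u1) ⊔ (c1 + v1) = c1 + w1 → (c2 + u2) ⊔ (c2 + v2) = c2 + w2 →
        u1 ⊔ v1 = w1 → u2 ⊔ v2 = w2 →
        (∀ lam : Λ, ((m1', m2') : ℕ × ℕ) ⊔ (n1', n2') ≤ d lam →
          seg lam (m1', m2') ((m1', m2') + d lam - (((m1', m2') : ℕ × ℕ) ⊔ (n1', n2'))) =
          seg lam (n1', n2') ((n1', n2') + d lam - (((m1', m2') : ℕ × ℕ) ⊔ (n1', n2')))) →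
        ∀ lam : Λ, ((u1, u2) : ℕ × ℕ) ⊔ (v1, v2) ≤ d lam →
          seg lam (u1, u2) ((u1, u2) + d lam - (((u1, u2) : ℕ × ℕ) ⊔ (v1, v2))) =
          seg lam (v1, v2) ((v1, v2) + d lam - (((u1, u2) : ℕ × ℕ) ⊔ (v1, v2))) := by
      intro m1' m2' n1' n2' c1 c2 u1 u2 v1 v2 w1 w2 e1 e2 e3 e4 hsup1 hsup2 hw1 hw2 hpe
      subst e1; subst e2; subst e3; subst e4
      intro lam hl
      obtain ⟨L1, L2, hL⟩ : ∃ L1 L2 : ℕ, d lam = (L1, L2) := ⟨(d lam).1, (d lam).2, rfl⟩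
      rw [hL, Prod.mk_sup_mk, hw1, hw2, Prod.mk_le_mk] at hl
      obtain ⟨hl1, hl2⟩ := hl
      have hu1w : u1 ≤ w1 := by rw [← hw1]; exact le_sup_left
      have hv1w : v1 ≤ w1 := by rw [← hw1]; exact le_sup_right
      have hu2w : u2 ≤ w2 := by rw [← hw2]; exact le_sup_left
      have hv2w : v2 ≤ w2 := by rw [← hw2]; exact le_sup_right
      obtain ⟨x, hx⟩ := hex (c1, c2)
      have hdx : d (x * lam) = (c1 + L1, c2 + L2) := by rw [hd, hx, hL, Prod.mk_add_mk]
      have h := hpe (x * lam) (by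
        rw [hdx, Prod.mk_sup_mk, hsup1, hsup2, Prod.mk_le_mk]
        omega)
      rw [hdx, Prod.mk_sup_mk, hsup1, hsup2] at h
      rw [show ((c1 + u1, c2 + u2) : ℕ × ℕ) + (c1 + L1, c2 + L2) - (c1 + w1, c2 + w2) =
          (c1, c2) + ((u1, u2) + (L1, L2) - (w1, w2)) by
        simp only [Prod.mk_add_mk, Prod.mk_sub_mk, Prod.mk.injEq, true_and, and_true]
        omega] at h
      rw [show ((c1 + v1, c2 + v2) : ℕ × ℕ) + (c1 + L1, c2 + L2) - (c1 + w1, c2 + w2) =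
          (c1, c2) + ((v1, v2) + (L1, L2) - (w1, w2)) by
        simp only [Prod.mk_add_mk, Prod.mk_sub_mk, Prod.mk.injEq, true_and, and_true]
        omega] at h
      rw [show ((c1 + u1, c2 + u2) : ℕ × ℕ) = (c1, c2) + (u1, u2) from (Prod.mk_add_mk ..).symm] at h
      rw [show ((c1 + v1, c2 + v2) : ℕ × ℕ) = (c1, c2) + (v1, v2) from (Prod.mk_add_mk ..).symm] at h
      have hsh := hshift x lam
      rw [hx, hL] at hsh
      rw [hsh _ _ (by
            simp only [Prod.mk_add_mk, Prod.mk_sub_mk, Prod.mk_le_mk]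
            omega) (by
            simp only [Prod.mk_add_mk, Prod.mk_sub_mk, Prod.mk_le_mk]
            omega),
         hsh _ _ (by
            simp only [Prod.mk_add_mk, Prod.mk_sub_mk, Prod.mk_le_mk]
            omega) (by
            simp only [Prod.mk_add_mk, Prod.mk_sub_mk, Prod.mk_le_mk]
            omega)] at h
      rw [hL, Prod.mk_sup_mk, hw1, hw2]
      exact h
    -- symmetry of the periodicity condition
    have hsym : ∀ u v : ℕ × ℕ,
        (∀ lam : Λ, u ⊔ v ≤ d lam →
          seg lam u (u + d lam - (u ⊔ v)) = seg lam v (v + d lam - (u ⊔ v))) →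
        ∀ lam : Λ, v ⊔ u ≤ d lam →
          seg lam v (v + d lam - (v ⊔ u)) = seg lam u (u + d lam - (v ⊔ u)) := by
      intro u v h lam hl
      rw [sup_comm v u] at hl ⊢
      exact (h lam hl).symm
    -- degenerate periodicities are impossible
    have hdegen : ∀ w1 w2 : ℕ, ¬(w1 = 0 ∧ w2 = 0) →
        (∀ lam : Λ, ((w1, w2) : ℕ × ℕ) ⊔ (0, 0) ≤ d lam →
          seg lam (w1, w2) ((w1, w2) + d lam - (((w1, w2) : ℕ × ℕ) ⊔ (0, 0))) =
          seg lam (0, 0) ((0, 0) + d lam - (((w1, w2) : ℕ × ℕ) ⊔ (0, 0)))) → False := by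
      intro w1 w2 hw hp
      have hsup0 : ((w1, w2) : ℕ × ℕ) ⊔ (0, 0) = (w1, w2) := by
        rw [Prod.mk_sup_mk, Prod.mk.injEq]
        omega
      rw [hsup0] at hp
      by_cases h1 : 0 < w1
      · obtain ⟨y, hy⟩ := hex (w1 - 1, w2)
        have hdlam : d (eB * y * eB') = (w1 + 1, w2) := by
          simp only [hd, heB, heB', hy, Prod.mk_add_mk, Prod.mk.injEq, true_and, and_true]
          omega
        have h := hp (eB * y * eB') (by rw [hdlam, Prod.mk_le_mk]; omega)
        rw [hdlam] at h
        rw [show ((w1, w2) : ℕ × ℕ) + (w1 + 1, w2) - (w1, w2) = ((w1 + 1 : ℕ), w2) by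
          simp only [Prod.mk_add_mk, Prod.mk_sub_mk, Prod.mk.injEq, true_and, and_true]; omega] at h
        rw [show ((0, 0) : ℕ × ℕ) + (w1 + 1, w2) - (w1, w2) = ((1 : ℕ), (0 : ℕ)) by
          simp only [Prod.mk_add_mk, Prod.mk_sub_mk, Prod.mk.injEq, true_and, and_true]; omega] at h
        have e1 : seg (eB * y * eB') (w1, w2) (w1 + 1, w2) = eB' := by
          refine hsegU _ _ _ (eB * y) eB' 1 (by rw [Prod.mk_le_mk]; omega)
            (by rw [hdlam]) ?_ ?_ (by rw [mul_one])
          · simp only [hd, heB, hy, Prod.mk_add_mk, Prod.mk.injEq, true_and, and_true]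
            omega
          · rw [heB', Prod.mk_sub_mk, Prod.mk.injEq]
            omega
        have e2 : seg (eB * y * eB') (0, 0) (1, 0) = eB := by
          refine hsegU _ _ _ 1 eB (y * eB') (by rw [Prod.mk_le_mk]; omega)
            (by rw [hdlam, Prod.mk_le_mk]; omega) (by rw [hd1]; rfl) ?_ ?_
          · rw [heB, Prod.mk_sub_mk, Prod.mk.injEq]
            omega
          · rw [one_mul, ← mul_assoc]
        rw [e1, e2] at h
        exact hBne' h.symm
      · have h2 : 0 < w2 := by omega
        obtain ⟨y, hy⟩ := hex (w1, w2 - 1)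
        have hdlam : d (eR * y * eR') = (w1, w2 + 1) := by
          simp only [hd, heR, heR', hy, Prod.mk_add_mk, Prod.mk.injEq, true_and, and_true]
          omega
        have h := hp (eR * y * eR') (by rw [hdlam, Prod.mk_le_mk]; omega)
        rw [hdlam] at h
        rw [show ((w1, w2) : ℕ × ℕ) + (w1, w2 + 1) - (w1, w2) = (w1, (w2 + 1 : ℕ)) by
          simp only [Prod.mk_add_mk, Prod.mk_sub_mk, Prod.mk.injEq, true_and, and_true]; omega] at h
        rw [show ((0, 0) : ℕ × ℕ) + (w1, w2 + 1) - (w1, w2) = ((0 : ℕ), (1 : ℕ)) by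
          simp only [Prod.mk_add_mk, Prod.mk_sub_mk, Prod.mk.injEq, true_and, and_true]; omega] at h
        have e1 : seg (eR * y * eR') (w1, w2) (w1, w2 + 1) = eR' := by
          refine hsegU _ _ _ (eR * y) eR' 1 (by rw [Prod.mk_le_mk]; omega)
            (by rw [hdlam]) ?_ ?_ (by rw [mul_one])
          · simp only [hd, heR, hy, Prod.mk_add_mk, Prod.mk.injEq, true_and, and_true]
            omega
          · rw [heR', Prod.mk_sub_mk, Prod.mk.injEq]
            omega
        have e2 : seg (eR * y * eR') (0, 0) (0, 1) = eR := by
          refine hsegU _ _ _ 1 eR (y * eR') (by rw [Prod.mk_le_mk]; omega)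
            (by rw [hdlam, Prod.mk_le_mk]; omega) (by rw [hd1]; rfl) ?_ ?_
          · rw [heR, Prod.mk_sub_mk, Prod.mk.injEq]
            omega
          · rw [one_mul, ← mul_assoc]
        rw [e1, e2] at h
        exact hRne' h.symm
    have hmncomp : ¬(m1 = n1 ∧ m2 = n2) := by
      rintro ⟨h1, h2⟩
      exact hmn (by rw [h1, h2])
    rcases Nat.le_total m1 n1 with hc1 | hc1 <;> rcases Nat.le_total m2 n2 with hc2 | hc2
    · -- m ≤ n : m' = 0
      have ht := transfer m1 m2 n1 n2 m1 m2 0 0 (n1 - m1) (n2 - m2) (n1 - m1) (n2 - m2)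
        (by omega) (by omega) (by omega) (by omega)
        (sup_eq_right.mpr (by omega)) (sup_eq_right.mpr (by omega))
        (sup_eq_right.mpr (by omega)) (sup_eq_right.mpr (by omega)) hper
      exact absurd (hsym _ _ ht) (fun hh => hdegen (n1 - m1) (n2 - m2) (by omega) hh)
    · -- m1 ≤ n1, n2 ≤ m2
      have ht := transfer m1 m2 n1 n2 m1 n2 0 (m2 - n2) (n1 - m1) 0 (n1 - m1) (m2 - n2)
        (by omega) (by omega) (by omega) (by omega)
        (sup_eq_right.mpr (by omega)) (sup_eq_left.mpr (by omega))
        (sup_eq_right.mpr (by omega)) (sup_eq_left.mpr (by omega)) hper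
      by_cases hz1 : n1 - m1 = 0
      · simp only [hz1] at ht
        exact absurd ht (fun hh => hdegen 0 (m2 - n2) (by omega) hh)
      · by_cases hz2 : m2 - n2 = 0
        · simp only [hz2] at ht
          exact absurd (hsym _ _ ht) (fun hh => hdegen (n1 - m1) 0 (by omega) hh)
        · exact build (n1 - m1) (m2 - n2) (by omega) (by omega) (hsym _ _ ht)
    · -- n1 ≤ m1, m2 ≤ n2
      have ht := transfer m1 m2 n1 n2 n1 m2 (m1 - n1) 0 0 (n2 - m2) (m1 - n1) (n2 - m2)
        (by omega) (by omega) (by omega) (by omega)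
        (sup_eq_left.mpr (by omega)) (sup_eq_right.mpr (by omega))
        (sup_eq_left.mpr (by omega)) (sup_eq_right.mpr (by omega)) hper
      by_cases hz1 : m1 - n1 = 0
      · simp only [hz1] at ht
        exact absurd (hsym _ _ ht) (fun hh => hdegen 0 (n2 - m2) (by omega) hh)
      · by_cases hz2 : n2 - m2 = 0
        · simp only [hz2] at ht
          exact absurd ht (fun hh => hdegen (m1 - n1) 0 (by omega) hh)
        · exact build (m1 - n1) (n2 - m2) (by omega) (by omega) ht
    · -- n ≤ m : n' = 0
      have ht := transfer m1 m2 n1 n2 n1 n2 (m1 - n1) (m2 - n2) 0 0 (m1 - n1) (m2 - n2)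
        (by omega) (by omega) (by omega) (by omega)
        (sup_eq_left.mpr (by omega)) (sup_eq_left.mpr (by omega))
        (sup_eq_left.mpr (by omega)) (sup_eq_left.mpr (by omega)) hper
      exact absurd ht (fun hh => hdegen (m1 - n1) (m2 - n2) (by omega) hh)
  · -- backward direction
    rintro ⟨a, b, γ, ha, hb, hrel⟩
    refine ⟨(a, 0), (0, b), ?_, ?_⟩
    · intro h
      rw [Prod.mk.injEq] at h
      omega
    have hsup : ((a, 0) : ℕ × ℕ) ⊔ (0, b) = (a, b) := by simp [Prod.sup_def]
    rw [hsup]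
    -- notation for γ and its inverse on plain elements
    have hdG : ∀ (x : Λ) (h : d x = ((a : ℕ), (0 : ℕ))), d ((γ ⟨x, h⟩ : Λ)) = (0, b) :=
      fun x h => (γ ⟨x, h⟩).2
    have hdGi : ∀ (y : Λ) (h : d y = ((0 : ℕ), (b : ℕ))), d ((γ.symm ⟨y, h⟩ : Λ)) = (a, 0) :=
      fun y h => (γ.symm ⟨y, h⟩).2
    have hrel1 : ∀ (x : Λ) (hx : d x = ((a : ℕ), (0 : ℕ))) (y : Λ)
        (hy : d y = ((0 : ℕ), (b : ℕ))), x * y = (γ ⟨x, hx⟩ : Λ) * (γ.symm ⟨y, hy⟩ : Λ) :=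
      fun x hx y hy => hrel ⟨x, hx⟩ ⟨y, hy⟩
    -- u * γ(A') = γ(u) * A'
    have hrel2 : ∀ (u : Λ) (hu : d u = ((a : ℕ), (0 : ℕ))) (A' : Λ)
        (hA' : d A' = ((a : ℕ), (0 : ℕ))),
        u * (γ ⟨A', hA'⟩ : Λ) = (γ ⟨u, hu⟩ : Λ) * A' := by
      intro u hu A' hA'
      have h := hrel1 u hu (γ ⟨A', hA'⟩ : Λ) (hdG A' hA')
      rw [h]
      congr 1
      rw [show (⟨(γ ⟨A', hA'⟩ : Λ), hdG A' hA'⟩ :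
          {ν : Λ // d ν = ((0 : ℕ), (b : ℕ))}) = γ ⟨A', hA'⟩ from rfl, Equiv.symm_apply_apply]
    -- γ⁻¹(N) * M = N * γ⁻¹(M)
    have hrel3 : ∀ (N : Λ) (hN : d N = ((0 : ℕ), (b : ℕ))) (M : Λ)
        (hM : d M = ((0 : ℕ), (b : ℕ))),
        (γ.symm ⟨N, hN⟩ : Λ) * M = N * (γ.symm ⟨M, hM⟩ : Λ) := by
      intro N hN M hM
      have h := hrel1 (γ.symm ⟨N, hN⟩ : Λ) (hdGi N hN) M hM
      rw [h]
      congr 1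
      rw [show (⟨(γ.symm ⟨N, hN⟩ : Λ), hdGi N hN⟩ :
          {μ : Λ // d μ = ((a : ℕ), (0 : ℕ))}) = γ.symm ⟨N, hN⟩ from rfl,
        Equiv.apply_symm_apply]
    -- lemma ♠ : pulling γ⁻¹ of the leading (0,b)-block through a red word
    have hRed : ∀ t' : ℕ, ∀ (N τ τ' N' : Λ) (hN : d N = ((0 : ℕ), (b : ℕ))),
        d τ = (0, t') → d τ' = (0, t') → d N' = ((0 : ℕ), (b : ℕ)) → N * τ = τ' * N' →
        ∃ m' : Λ, d m' = (a, 0) ∧ (γ.symm ⟨N, hN⟩ : Λ) * τ = τ' * m' := by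
      intro t'
      induction t' using Nat.strong_induction_on with
      | _ t' IH =>
        intro N τ τ' N' hN hτ hτ' hN' hS
        by_cases hcase : t' ≤ b
        · -- base case
          obtain ⟨v, hv⟩ := hex (0, b)
          obtain ⟨σ, m₁, hσ, hm₁, hf1⟩ := hsplit ((γ.symm ⟨N, hN⟩ : Λ) * τ) (0, t') (a, 0)
            (by simp only [hd, hdGi N hN, hτ, Prod.mk_add_mk, Prod.mk.injEq, true_and, and_true]; omega)
          refine ⟨m₁, hm₁, ?_⟩
          suffices hστ : σ = τ' by rw [hf1, hστ]
          obtain ⟨N₃, v₃, hN₃, hv₃, hτv⟩ := hsplit (τ * v) (0, b) (0, t')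
            (by simp only [hd, hτ, hv, Prod.mk_add_mk, Prod.mk.injEq, true_and, and_true]; omega)
          have hQ1 : (γ.symm ⟨N, hN⟩ : Λ) * τ * v =
              σ * ((γ ⟨m₁, hm₁⟩ : Λ) * (γ.symm ⟨v, hv⟩ : Λ)) := by
            rw [hf1, mul_assoc, hrel1 m₁ hm₁ v hv]
          have hQ2 : (γ.symm ⟨N, hN⟩ : Λ) * τ * v = N * ((γ.symm ⟨N₃, hN₃⟩ : Λ) * v₃) := by
            rw [mul_assoc, hτv, ← mul_assoc, hrel3 N hN N₃ hN₃, mul_assoc]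
          obtain ⟨σ₂, m₂, hσ₂, hm₂, hf2⟩ := hsplit ((γ.symm ⟨N₃, hN₃⟩ : Λ) * v₃) (0, t') (a, 0)
            (by simp only [hd, hdGi N₃ hN₃, hv₃, Prod.mk_add_mk,
                  Prod.mk.injEq, true_and, and_true]; omega)
          have hc := hcan (σ * (γ ⟨m₁, hm₁⟩ : Λ)) (γ.symm ⟨v, hv⟩ : Λ) (N * σ₂) m₂
            (by simp only [hd, hσ, hdG m₁ hm₁, hN, hσ₂, Prod.mk_add_mk,
                  Prod.mk.injEq, true_and, and_true]; omega)
            (by rw [mul_assoc, mul_assoc, ← hQ1, hQ2, hf2, ← mul_assoc])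
          obtain ⟨P, Q', hP, hQ', hNPQ⟩ := hsplit N (0, t') (0, b - t')
            (by rw [hN, Prod.mk_add_mk, Prod.mk.injEq]; omega)
          have hc2 := hcan σ (γ ⟨m₁, hm₁⟩ : Λ) P (Q' * σ₂)
            (hσ.trans hP.symm) (by rw [hc.1, hNPQ, mul_assoc])
          have hc3 := hcan P (Q' * τ) τ' N' (hP.trans hτ'.symm)
            (by rw [← mul_assoc, ← hNPQ, hS])
          rw [hc2.1, hc3.1]
        · -- inductive step: t' > b
          obtain ⟨N₂, τ₂, hN₂, hτ₂, hτs⟩ := hsplit τ (0, b) (0, t' - b)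
            (by rw [hτ, Prod.mk_add_mk, Prod.mk.injEq]; omega)
          obtain ⟨τ'', N'', hτ'', hN'', hτs2⟩ := hsplit τ (0, t' - b) (0, b)
            (by rw [hτ, Prod.mk_add_mk, Prod.mk.injEq]; omega)
          obtain ⟨m₂, hm₂, hIH⟩ := IH (t' - b) (by omega) N₂ τ₂ τ'' N'' hN₂ hτ₂ hτ'' hN''
            (hτs.symm.trans hτs2)
          refine ⟨m₂, hm₂, ?_⟩
          have hτeq : N * τ'' = τ' := by
            refine (hcan (N * τ'') N'' τ' N' ?_ ?_).1
            · simp only [hd, hN, hτ'', hτ', Prod.mk_add_mk, Prod.mk.injEq, true_and, and_true]; omega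
            · rw [mul_assoc, ← hτs2, hS]
          calc (γ.symm ⟨N, hN⟩ : Λ) * τ = (γ.symm ⟨N, hN⟩ : Λ) * (N₂ * τ₂) := by rw [hτs]
            _ = ((γ.symm ⟨N, hN⟩ : Λ) * N₂) * τ₂ := (mul_assoc _ _ _).symm
            _ = (N * (γ.symm ⟨N₂, hN₂⟩ : Λ)) * τ₂ := by rw [hrel3 N hN N₂ hN₂]
            _ = N * ((γ.symm ⟨N₂, hN₂⟩ : Λ) * τ₂) := mul_assoc _ _ _
            _ = N * (τ'' * m₂) := by rw [hIH]
            _ = (N * τ'') * m₂ := (mul_assoc _ _ _).symm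
            _ = τ' * m₂ := by rw [hτeq]
    -- lemma ★
    have hStar : ∀ (t : ℕ) (A R₁ R₂ : Λ) (hA : d A = ((a : ℕ), (0 : ℕ))),
        d R₁ = (0, t) → d R₂ = ((0 : ℕ), (b : ℕ)) →
        ∃ m' : Λ, d m' = (a, 0) ∧ A * (R₁ * R₂) = (γ ⟨A, hA⟩ : Λ) * (R₁ * m') := by
      intro t A R₁ R₂ hA hR₁ hR₂
      obtain ⟨N, τ, hN, hτ, hR⟩ := hsplit (R₁ * R₂) (0, b) (0, t)
        (by simp only [hd, hR₁, hR₂, Prod.mk_add_mk, Prod.mk.injEq, true_and, and_true]; omega)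
      obtain ⟨m', hm', h⟩ := hRed t N τ R₁ R₂ hN hτ hR₁ hR₂ hR.symm
      refine ⟨m', hm', ?_⟩
      calc A * (R₁ * R₂) = A * (N * τ) := by rw [← hR]
        _ = (A * N) * τ := (mul_assoc _ _ _).symm
        _ = ((γ ⟨A, hA⟩ : Λ) * (γ.symm ⟨N, hN⟩ : Λ)) * τ := by rw [hrel1 A hA N hN]
        _ = (γ ⟨A, hA⟩ : Λ) * ((γ.symm ⟨N, hN⟩ : Λ) * τ) := mul_assoc _ _ _
        _ = (γ ⟨A, hA⟩ : Λ) * (R₁ * m') := by rw [h]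
    -- lemma ♣
    have hClub : ∀ s : ℕ, ∀ (A C C' A' : Λ) (hA' : d A' = ((a : ℕ), (0 : ℕ))),
        d A = ((a : ℕ), (0 : ℕ)) → d C = (s, 0) → d C' = (s, 0) → A * C = C' * A' →
        ∃ ν' : Λ, d ν' = (0, b) ∧ C' * (γ ⟨A', hA'⟩ : Λ) = ν' * C := by
      intro s
      induction s using Nat.strong_induction_on with
      | _ s IH =>
        intro A C C' A' hA' hA hC hC' hW
        by_cases hcase : s ≤ a
        · -- base case
          obtain ⟨v, hv⟩ := hex (a, 0)
          obtain ⟨ν₀, w, hν₀, hw, hf0⟩ := hsplit (C' * (γ ⟨A', hA'⟩ : Λ)) (0, b) (s, 0)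
            (by simp only [hd, hC', hdG A' hA', Prod.mk_add_mk, Prod.mk.injEq, true_and, and_true]; omega)
          refine ⟨ν₀, hν₀, ?_⟩
          suffices hwC : w = C by rw [hf0, hwC]
          obtain ⟨C₂, A₂, hC₂, hA₂, hvC'⟩ := hsplit (v * C') (s, 0) (a, 0)
            (by simp only [hd, hv, hC', Prod.mk_add_mk, Prod.mk.injEq, true_and, and_true]; omega)
          have hQ1 : v * C' * (γ ⟨A', hA'⟩ : Λ) =
              (γ ⟨v, hv⟩ : Λ) * ((γ.symm ⟨ν₀, hν₀⟩ : Λ) * w) := by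
            rw [mul_assoc, hf0, ← mul_assoc, hrel1 v hv ν₀ hν₀, mul_assoc]
          obtain ⟨ν₂, w₂, hν₂, hw₂, hf2⟩ := hsplit (C₂ * (γ ⟨A₂, hA₂⟩ : Λ)) (0, b) (s, 0)
            (by simp only [hd, hC₂, hdG A₂ hA₂, Prod.mk_add_mk, Prod.mk.injEq, true_and, and_true]; omega)
          have hQ2 : v * C' * (γ ⟨A', hA'⟩ : Λ) = ν₂ * (w₂ * A') := by
            calc v * C' * (γ ⟨A', hA'⟩ : Λ) = (C₂ * A₂) * (γ ⟨A', hA'⟩ : Λ) := by rw [hvC']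
              _ = C₂ * (A₂ * (γ ⟨A', hA'⟩ : Λ)) := mul_assoc _ _ _
              _ = C₂ * ((γ ⟨A₂, hA₂⟩ : Λ) * A') := by rw [hrel2 A₂ hA₂ A' hA']
              _ = (C₂ * (γ ⟨A₂, hA₂⟩ : Λ)) * A' := (mul_assoc _ _ _).symm
              _ = (ν₂ * w₂) * A' := by rw [hf2]
              _ = ν₂ * (w₂ * A') := mul_assoc _ _ _
          have hc := hcan (γ ⟨v, hv⟩ : Λ) ((γ.symm ⟨ν₀, hν₀⟩ : Λ) * w) ν₂ (w₂ * A')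
            ((hdG v hv).trans hν₂.symm) (hQ1.symm.trans hQ2)
          obtain ⟨A₁', A₂', hA₁', hA₂', hA's⟩ := hsplit A' (a - s, 0) (s, 0)
            (by rw [hA', Prod.mk_add_mk, Prod.mk.injEq]; omega)
          have hc2 := hcan (γ.symm ⟨ν₀, hν₀⟩ : Λ) w (w₂ * A₁') A₂'
            (by simp only [hdGi ν₀ hν₀, hd, hw₂, hA₁', Prod.mk_add_mk, Prod.mk.injEq, true_and, and_true]; omega)
            (by rw [hc.2, hA's, ← mul_assoc])
          have hc3 := hcan A C (C' * A₁') A₂'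
            (by simp only [hA, hd, hC', hA₁', Prod.mk_add_mk, Prod.mk.injEq, true_and, and_true]; omega)
            (by rw [hW, hA's, ← mul_assoc])
          rw [hc2.2, hc3.2]
        · -- inductive step : s > a
          obtain ⟨C'', u, hC'', hu, h1⟩ := hsplit C' (s - a, 0) (a, 0)
            (by rw [hC', Prod.mk_add_mk, Prod.mk.injEq]; omega)
          obtain ⟨At, Ct, hAt, hCt, h2⟩ := hsplit C' (a, 0) (s - a, 0)
            (by rw [hC', Prod.mk_add_mk, Prod.mk.injEq]; omega)
          obtain ⟨ν', hν', h3⟩ := IH (s - a) (by omega) At Ct C'' u hu hAt hCt hC''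
            (h2.symm.trans h1)
          refine ⟨ν', hν', ?_⟩
          have hCeq : C = Ct * A' := by
            refine (hcan A C At (Ct * A')
              (hA.trans hAt.symm) ?_).2
            rw [hW, h2, mul_assoc]
          calc C' * (γ ⟨A', hA'⟩ : Λ) = (C'' * u) * (γ ⟨A', hA'⟩ : Λ) := by rw [h1]
            _ = C'' * (u * (γ ⟨A', hA'⟩ : Λ)) := mul_assoc _ _ _
            _ = C'' * ((γ ⟨u, hu⟩ : Λ) * A') := by rw [hrel2 u hu A' hA']
            _ = (C'' * (γ ⟨u, hu⟩ : Λ)) * A' := (mul_assoc _ _ _).symm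
            _ = (ν' * Ct) * A' := by rw [h3]
            _ = ν' * (Ct * A') := mul_assoc _ _ _
            _ = ν' * C := by rw [hCeq]
    -- the main computation
    intro lam hl
    obtain ⟨k1, k2, hL⟩ : ∃ k1 k2 : ℕ, d lam = (k1, k2) := ⟨(d lam).1, (d lam).2, rfl⟩
    rw [hL, Prod.mk_le_mk] at hl
    obtain ⟨hk1, hk2⟩ := hl
    obtain ⟨W, Rr, hW, hRr, hWR⟩ := hsplit lam (k1, 0) (0, k2)
      (by rw [hL, Prod.mk_add_mk, Prod.mk.injEq]; omega)
    obtain ⟨A, C, hA, hC, h1⟩ := hsplit W (a, 0) (k1 - a, 0)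
      (by rw [hW, Prod.mk_add_mk, Prod.mk.injEq]; omega)
    obtain ⟨C', A', hC', hA', h2⟩ := hsplit W (k1 - a, 0) (a, 0)
      (by rw [hW, Prod.mk_add_mk, Prod.mk.injEq]; omega)
    obtain ⟨R₁, R₂, hR₁, hR₂, h3⟩ := hsplit Rr (0, k2 - b) (0, b)
      (by rw [hRr, Prod.mk_add_mk, Prod.mk.injEq]; omega)
    rw [hL]
    rw [show ((a, 0) : ℕ × ℕ) + (k1, k2) - (a, b) = (k1, k2 - b) by
      simp only [Prod.mk_add_mk, Prod.mk_sub_mk, Prod.mk.injEq, true_and, and_true]; omega]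
    rw [show ((0, b) : ℕ × ℕ) + (k1, k2) - (a, b) = (k1 - a, k2) by
      simp only [Prod.mk_add_mk, Prod.mk_sub_mk, Prod.mk.injEq, true_and, and_true]; omega]
    have hCR : d (C * R₁) = (k1 - a, k2 - b) := by
      simp only [hd, hC, hR₁, Prod.mk_add_mk, Prod.mk.injEq, true_and, and_true]; omega
    have eL : seg lam (a, 0) (k1, k2 - b) = C * R₁ := by
      refine hsegU _ _ _ A (C * R₁) R₂ (by rw [Prod.mk_le_mk]; omega)
        (by rw [hL, Prod.mk_le_mk]; omega) hA
        (by rw [hCR, Prod.mk_sub_mk, Prod.mk.injEq]; omega) ?_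
      calc lam = W * Rr := hWR
        _ = (A * C) * (R₁ * R₂) := by rw [h1, h3]
        _ = A * (C * (R₁ * R₂)) := mul_assoc _ _ _
        _ = A * ((C * R₁) * R₂) := by rw [mul_assoc]
        _ = A * (C * R₁) * R₂ := (mul_assoc _ _ _).symm
    obtain ⟨m', hm', hst⟩ := hStar (k2 - b) A' R₁ R₂ hA' hR₁ hR₂
    obtain ⟨ν', hν', hcl⟩ := hClub (k1 - a) A C C' A' hA' hA hC hC' (h1.symm.trans h2)
    have eR : seg lam (0, b) (k1 - a, k2) = C * R₁ := by
      refine hsegU _ _ _ ν' (C * R₁) m' (by rw [Prod.mk_le_mk]; omega)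
        (by rw [hL, Prod.mk_le_mk]; omega) hν'
        (by rw [hCR, Prod.mk_sub_mk, Prod.mk.injEq]; omega) ?_
      calc lam = W * Rr := hWR
        _ = (C' * A') * (R₁ * R₂) := by rw [h2, h3]
        _ = C' * (A' * (R₁ * R₂)) := mul_assoc _ _ _
        _ = C' * ((γ ⟨A', hA'⟩ : Λ) * (R₁ * m')) := by rw [hst]
        _ = (C' * (γ ⟨A', hA'⟩ : Λ)) * (R₁ * m') := (mul_assoc _ _ _).symm
        _ = (ν' * C) * (R₁ * m') := by rw [hcl]
        _ = ν' * (C * (R₁ * m')) := mul_assoc _ _ _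
        _ = ν' * ((C * R₁) * m') := by rw [mul_assoc]
        _ = ν' * (C * R₁) * m' := (mul_assoc _ _ _).symm
    rw [eL, eR]
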